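/- (Welch bound) For any collection Φ = {φ_j}_{j=1}^n of unit vectors in F^m with n ≥ m, the coherence μ(Φ) = max_{j≠l} |⟨φ_j, φ_l⟩| satisfies μ(Φ) ≥ √((n−m)/(m(n−1))). -/

import Mathlib

open scoped InnerProductSpace

/-- The coherence of a family of vectors: the supremum of absolute pairwise inner products. -/
noncomputable def coherence (𝕜 : Type*) {E : Type*} [RCLike 𝕜] [NormedAddCommGroup E]
    [InnerProductSpace 𝕜 E] {n : ℕ} (φ : Fin n → E) : ℝ :=
  sSup {r : ℝ | ∃ j l : Fin n, j ≠ l ∧ r = ‖(⟪φ j, φ l⟫_𝕜 : 𝕜)‖}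

/-- Welch bound: any `n` unit vectors in `𝕜^m` with `m ≤ n`, `1 < n` have coherence at least
`√((n-m)/(m(n-1)))`. -/
theorem welch_bound (𝕜 : Type*) [RCLike 𝕜] (m n : ℕ) (hm : 0 < m) (hmn : m ≤ n) (hn : 1 < n)
    (φ : Fin n → EuclideanSpace 𝕜 (Fin m)) (hunit : ∀ j, ‖φ j‖ = 1) :
    coherence 𝕜 φ ≥ Real.sqrt (((n : ℝ) - m) / (m * ((n : ℝ) - 1))) := by
  classical
  set g : Fin n → Fin n → 𝕜 := fun j l => ⟪φ j, φ l⟫_𝕜 with hg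
  have hginner : ∀ j l, g j l = ∑ a, (starRingEnd 𝕜) (φ j a) * φ l a := by
    intro j l
    simp [hg, PiLp.inner_apply, RCLike.inner_apply]
    exact Finset.sum_congr rfl fun _ _ => mul_comm _ _
  set S : Fin m → Fin m → 𝕜 := fun a b => ∑ j, φ j a * (starRingEnd 𝕜) (φ j b) with hS
  -- key identity
  have key : (∑ j, ∑ l, (starRingEnd 𝕜) (g j l) * g j l)
      = ∑ a, ∑ b, (starRingEnd 𝕜) (S a b) * S a b := by
    have h1 : ∀ j l, (starRingEnd 𝕜) (g j l) * g j l
        = ∑ a, ∑ b, (φ j a * (starRingEnd 𝕜) (φ j b)) * ((starRingEnd 𝕜) (φ l a) * φ l b) := by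
      intro j l
      rw [hginner, map_sum, Finset.sum_mul_sum]
      refine Finset.sum_congr rfl fun a _ => Finset.sum_congr rfl fun b _ => ?_
      simp only [map_mul, RCLike.conj_conj, RingHom.id_apply, RingHomCompTriple.comp_apply]
      ring
    have h2 : ∀ a b, (starRingEnd 𝕜) (S a b) * S a b
        = ∑ l, ∑ j, (φ j a * (starRingEnd 𝕜) (φ j b)) * ((starRingEnd 𝕜) (φ l a) * φ l b) := by
      intro a b
      rw [hS, map_sum, Finset.sum_mul_sum]
      refine Finset.sum_congr rfl fun l _ => Finset.sum_congr rfl fun j _ => ?_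
      simp only [map_mul, RCLike.conj_conj]
      ring
    simp only [h1, h2]
    calc ∑ j, ∑ l, ∑ a, ∑ b,
          (φ j a * (starRingEnd 𝕜) (φ j b)) * ((starRingEnd 𝕜) (φ l a) * φ l b)
        = ∑ j, ∑ a, ∑ l, ∑ b,
          (φ j a * (starRingEnd 𝕜) (φ j b)) * ((starRingEnd 𝕜) (φ l a) * φ l b) :=
          Finset.sum_congr rfl fun j _ => Finset.sum_comm
      _ = ∑ j, ∑ a, ∑ b, ∑ l,
          (φ j a * (starRingEnd 𝕜) (φ j b)) * ((starRingEnd 𝕜) (φ l a) * φ l b) :=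
          Finset.sum_congr rfl fun j _ => Finset.sum_congr rfl fun a _ => Finset.sum_comm
      _ = ∑ a, ∑ j, ∑ b, ∑ l,
          (φ j a * (starRingEnd 𝕜) (φ j b)) * ((starRingEnd 𝕜) (φ l a) * φ l b) :=
          Finset.sum_comm
      _ = ∑ a, ∑ b, ∑ j, ∑ l,
          (φ j a * (starRingEnd 𝕜) (φ j b)) * ((starRingEnd 𝕜) (φ l a) * φ l b) :=
          Finset.sum_congr rfl fun a _ => Finset.sum_comm
      _ = ∑ a, ∑ b, ∑ l, ∑ j,
          (φ j a * (starRingEnd 𝕜) (φ j b)) * ((starRingEnd 𝕜) (φ l a) * φ l b) :=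
          Finset.sum_congr rfl fun a _ => Finset.sum_congr rfl fun b _ => Finset.sum_comm
  have keyR : (∑ j, ∑ l, ‖g j l‖ ^ 2) = ∑ a, ∑ b, ‖S a b‖ ^ 2 := by
    have h := key
    simp only [RCLike.conj_mul] at h
    exact_mod_cast h
  -- real diagonal of S
  set t : Fin m → ℝ := fun a => ∑ j, ‖φ j a‖ ^ 2 with ht
  have hSdiag : ∀ a, S a a = (t a : ℝ) := by
    intro a
    simp [hS, ht, RCLike.mul_conj]
  have hnormsum : ∀ j, ∑ a, ‖φ j a‖ ^ 2 = 1 := by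
    intro j
    have h := EuclideanSpace.norm_eq (φ j)
    rw [hunit j] at h
    have h2 : Real.sqrt (∑ a, ‖φ j a‖ ^ 2) = 1 := by rw [← h]
    have := Real.sqrt_eq_one.mp h2
    exact this
  have htsum : ∑ a, t a = n := by
    rw [ht]
    rw [Finset.sum_comm]
    simp [hnormsum]
  -- Cauchy-Schwarz bound
  have hcs : (n : ℝ) ^ 2 ≤ m * ∑ a, (t a) ^ 2 := by
    have := sq_sum_le_card_mul_sum_sq (s := (Finset.univ : Finset (Fin m))) (f := t)
    rw [htsum] at this
    simpa using this
  have hdiag_le : ∑ a, (t a) ^ 2 ≤ ∑ a, ∑ b, ‖S a b‖ ^ 2 := by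
    refine Finset.sum_le_sum fun a _ => ?_
    have h1 : (t a) ^ 2 = ‖S a a‖ ^ 2 := by
      rw [hSdiag a]
      have hta : 0 ≤ t a := Finset.sum_nonneg fun j _ => sq_nonneg _
      rw [RCLike.norm_ofReal, abs_of_nonneg hta]
    rw [h1]
    exact Finset.single_le_sum (f := fun b => ‖S a b‖ ^ 2) (fun b _ => sq_nonneg _)
      (Finset.mem_univ a)
  have htotal : (n : ℝ) ^ 2 / m ≤ ∑ j, ∑ l, ‖g j l‖ ^ 2 := by
    rw [keyR, div_le_iff₀ (by exact_mod_cast hm)]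
    calc (n : ℝ) ^ 2 ≤ m * ∑ a, (t a) ^ 2 := hcs
      _ ≤ m * ∑ a, ∑ b, ‖S a b‖ ^ 2 := by
          exact mul_le_mul_of_nonneg_left hdiag_le (by positivity)
      _ = (∑ a, ∑ b, ‖S a b‖ ^ 2) * m := mul_comm _ _
  -- split diagonal / off-diagonal
  set D := (Finset.univ : Finset (Fin n)).offDiag with hD
  have hgdiag : ∀ j, ‖g j j‖ ^ 2 = 1 := by
    intro j
    have : g j j = ((1 : ℝ) : 𝕜) := by
      rw [hg]
      simp [inner_self_eq_norm_sq_to_K, hunit j]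
    rw [this]
    simp
  have hsplit : (∑ j, ∑ l, ‖g j l‖ ^ 2)
      = (∑ p ∈ D, ‖g p.1 p.2‖ ^ 2) + n := by
    have h1 : (∑ j, ∑ l, ‖g j l‖ ^ 2)
        = ∑ p ∈ Finset.univ ×ˢ Finset.univ, ‖g p.1 p.2‖ ^ 2 := by
      rw [Finset.sum_product]
    rw [h1, ← Finset.diag_union_offDiag,
      Finset.sum_union (Finset.disjoint_diag_offDiag _), Finset.sum_diag]
    simp only [hgdiag]
    simp [add_comm]
    rfl
  set c : ℝ := ((n : ℝ) - m) / (m * ((n : ℝ) - 1)) with hc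
  have hm' : (0 : ℝ) < m := by exact_mod_cast hm
  have hn1 : (0 : ℝ) < (n : ℝ) - 1 := by
    have : (1 : ℝ) < n := by exact_mod_cast hn
    linarith
  have hcard : (D.card : ℝ) = (n : ℝ) * ((n : ℝ) - 1) := by
    rw [hD, Finset.offDiag_card, Finset.card_univ, Fintype.card_fin]
    have h1 : n ≤ n * n := Nat.le_mul_of_pos_left n (by omega)
    push_cast [Nat.cast_sub h1]
    ring
  have hoff : ∑ p ∈ D, c ≤ ∑ p ∈ D, ‖g p.1 p.2‖ ^ 2 := by
    rw [Finset.sum_const, nsmul_eq_mul]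
    have h1 : (D.card : ℝ) * c = (n : ℝ) ^ 2 / m - n := by
      rw [hcard, hc]
      field_simp
    rw [h1]
    have := htotal
    rw [hsplit] at this
    linarith
  have hDne : D.Nonempty := by
    refine ⟨(⟨0, by omega⟩, ⟨1, by omega⟩), ?_⟩
    rw [hD, Finset.mem_offDiag]
    refine ⟨Finset.mem_univ _, Finset.mem_univ _, ?_⟩
    intro h
    have := congrArg Fin.val h
    simp at this
  obtain ⟨p, hpD, hp⟩ := Finset.exists_le_of_sum_le hDne hoff
  have hpne : p.1 ≠ p.2 := (Finset.mem_offDiag.mp hpD).2.2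
  -- conclude
  have hmem : ‖g p.1 p.2‖ ∈ {r : ℝ | ∃ j l : Fin n, j ≠ l ∧ r = ‖(⟪φ j, φ l⟫_𝕜 : 𝕜)‖} :=
    ⟨p.1, p.2, hpne, rfl⟩
  have hbdd : BddAbove {r : ℝ | ∃ j l : Fin n, j ≠ l ∧ r = ‖(⟪φ j, φ l⟫_𝕜 : 𝕜)‖} := by
    apply Set.Finite.bddAbove
    apply Set.Finite.subset (Set.finite_range (fun p : Fin n × Fin n => ‖g p.1 p.2‖))
    rintro r ⟨j, l, _, rfl⟩
    exact ⟨(j, l), rfl⟩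
  have hsqrt : Real.sqrt c ≤ ‖g p.1 p.2‖ := by
    have h1 : Real.sqrt c ≤ Real.sqrt (‖g p.1 p.2‖ ^ 2) := Real.sqrt_le_sqrt hp
    rwa [Real.sqrt_sq (norm_nonneg _)] at h1
  exact le_trans hsqrt (le_csSup hbdd hmem)
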